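/- arXiv:2205.14612 — 5 statements merged into one kernel-verified Lean document; each statement's English description precedes it below -/
import Mathlib

section
/- Fix a, b ∈ ℝ^d with a ≠ 0 and let φ(x, s) = a·s + b. Let x solve x'(s) = φ(x(s), s), x(0) = x₀, and let x_n be the Euler iterates with step 1/N: x_{n+1} = x_n + (1/N)(a·(n/N) + b). Then ‖x_N − x(1)‖ = ‖a‖/(2N). -/
open Set Real

/-- Tightness of the Euler error bound: for `φ(x, s) = s • a + b` the Euler error
at time 1 is exactly `‖a‖ / (2N)`. -/
theorem euler_error_tight
    {d : ℕ} (a b : EuclideanSpace ℝ (Fin d)) (ha : a ≠ 0)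
    (x : ℝ → EuclideanSpace ℝ (Fin d)) (x₀ : EuclideanSpace ℝ (Fin d))
    (hx0 : x 0 = x₀)
    (hx : ∀ s ∈ Icc (0:ℝ) 1, HasDerivAt x (s • a + b) s)
    (N : ℕ) (hN : 1 ≤ N)
    (xd : ℕ → EuclideanSpace ℝ (Fin d)) (hxd0 : xd 0 = x₀)
    (hxd : ∀ n : ℕ, xd (n + 1) = xd n + (N : ℝ)⁻¹ • (((n : ℝ) / N) • a + b)) :
    ‖xd N - x 1‖ = ‖a‖ / (2 * N) := by
  have hNR : (0:ℝ) < N := by exact_mod_cast Nat.lt_of_lt_of_le Nat.zero_lt_one hN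
  have hN0 : (N:ℝ) ≠ 0 := ne_of_gt hNR
  -- exact solution
  set g : ℝ → EuclideanSpace ℝ (Fin d) := fun s => x₀ + (s^2/2) • a + s • b with hg
  have hgd : ∀ s : ℝ, HasDerivAt g (s • a + b) s := by
    intro s
    have h1 : HasDerivAt (fun s : ℝ => s ^ 2 / 2) s s := by
      have := (hasDerivAt_pow 2 s).div_const 2
      simpa using this
    have h2 : HasDerivAt (fun s : ℝ => (s^2/2) • a) (s • a) s := by
      simpa using h1.smul_const a
    have h3 : HasDerivAt (fun s : ℝ => s • b) b s := by
      simpa using (hasDerivAt_id s).smul_const b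
    have h4 := ((hasDerivAt_const s x₀).add h2).add h3
    rw [zero_add] at h4
    exact h4
  have hx1 : x 1 = x₀ + (1/2 : ℝ) • a + b := by
    have heq := eq_of_has_deriv_right_eq (a := (0:ℝ)) (b := (1:ℝ))
      (f := x) (g := g) (f' := fun s => s • a + b)
      (fun s hs => (hx s ⟨hs.1, le_of_lt hs.2⟩).hasDerivWithinAt)
      (fun s hs => (hgd s).hasDerivWithinAt)
      (fun s hs => ((hx s hs).continuousAt.continuousWithinAt))
      (fun s hs => ((hgd s).continuousAt.continuousWithinAt))
      (by simp [hx0, hg])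
    have := heq 1 ⟨zero_le_one, le_refl 1⟩
    simpa [hg] using this
  -- discrete solution
  have hxdn : ∀ n : ℕ, xd n = x₀ + ((n * (n-1) : ℝ) / (2 * N^2)) • a + ((n : ℝ)/N) • b := by
    intro n
    induction n with
    | zero => simp [hxd0]
    | succ n ih =>
      rw [hxd n, ih]
      have h1 : ((n+1 : ℕ) * ((n+1 : ℕ)-1) : ℝ) / (2 * N^2)
          = (n * (n-1) : ℝ) / (2 * N^2) + (N:ℝ)⁻¹ * ((n:ℝ)/N) := by
        push_cast
        field_simp
        ring
      have h2 : ((n+1 : ℕ) : ℝ)/N = (n:ℝ)/N + (N:ℝ)⁻¹ := by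
        push_cast; field_simp
      rw [h1, h2, smul_add, smul_smul, add_smul, add_smul]
      abel
  have hxdN : xd N = x₀ + ((N * (N-1) : ℝ) / (2 * N^2)) • a + b := by
    rw [hxdn N, div_self hN0, one_smul]
  have key : xd N - x 1 = (-(1 / (2 * N)) : ℝ) • a := by
    rw [hxdN, hx1]
    have : ((N * (N-1) : ℝ) / (2 * N^2)) - 1/2 = -(1 / (2 * N)) := by
      field_simp; ring
    rw [show x₀ + ((N * (N-1) : ℝ) / (2 * N^2)) • a + b - (x₀ + (1/2 : ℝ) • a + b)
        = (((N * (N-1) : ℝ) / (2 * N^2)) - 1/2) • a by rw [sub_smul]; abel, this]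
  rw [key, norm_smul]
  rw [norm_neg, Real.norm_eq_abs, abs_of_pos (by positivity), one_div]
  ring
end

section
/- Consider the ResNet iteration x_{n+1} = x_n + (1/N) f(x_n, θ_n^N) in ℝ with f(x, θ) = θ (constant residual functions) and weights θ_n^N = n for 0 ≤ n ≤ N−1. Then x_N = x₀ + (N−1)/2, whereas the solution at time 1 of the ODE x'(s) = φ(x(s), s) with φ(x, s) = Ns (the residual interpolation) starting from x₀ is x(1) = x₀ + N/2, so ‖x_N − x(1)‖ = 1/2 for every N. -/
open Set Real

/-- ResNet with residuals `f(x, θ_n) = n` versus the residual-interpolation ODE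
`x'(s) = N s`: the gap at time 1 equals `1/2` for every depth `N`. -/
theorem resnet_residual_interpolation_gap
    (N : ℕ) (hN : 1 ≤ N)
    (x : ℕ → ℝ) (x₀ : ℝ) (hx0 : x 0 = x₀)
    (hx : ∀ n : ℕ, x (n + 1) = x n + (N : ℝ)⁻¹ * n)
    (xc : ℝ → ℝ) (hxc0 : xc 0 = x₀)
    (hxc : ∀ s ∈ Icc (0:ℝ) 1, HasDerivAt xc ((N : ℝ) * s) s) :
    x N = x₀ + ((N : ℝ) - 1) / 2 ∧ xc 1 = x₀ + (N : ℝ) / 2 ∧ ‖x N - xc 1‖ = 1 / 2 := by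
  have hNpos : (0:ℝ) < N := by exact_mod_cast hN
  have key : ∀ n : ℕ, x n = x₀ + (N : ℝ)⁻¹ * (n * (n - 1) / 2) := by
    intro n
    induction n with
    | zero => simp [hx0]
    | succ n ih =>
      rw [hx n, ih]
      push_cast
      ring
  have h1 : x N = x₀ + ((N : ℝ) - 1) / 2 := by
    rw [key N]
    field_simp
  -- ODE part: g s = xc s - N * s^2 / 2 has zero derivative on [0,1]
  set g : ℝ → ℝ := fun s => xc s - (N : ℝ) * s ^ 2 / 2 with hg
  have hgd : ∀ s ∈ Icc (0:ℝ) 1, HasDerivAt g 0 s := by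
    intro s hs
    have := (hxc s hs).sub (((hasDerivAt_pow 2 s).const_mul ((N:ℝ)/2)))
    convert this using 1
    · rfl
    · rfl
    · ext t; simp [hg]; ring
    · simp; ring
  have hgconst : g 1 = g 0 :=
    constant_of_has_deriv_right_zero (a := (0:ℝ)) (b := 1)
      (fun s hs => (hgd s hs).continuousAt.continuousWithinAt)
      (fun s hs => (hgd s ⟨hs.1, le_of_lt hs.2⟩).hasDerivWithinAt)
      1 ⟨zero_le_one, le_refl _⟩
  have h2 : xc 1 = x₀ + (N : ℝ) / 2 := by
    have : xc 1 - (N : ℝ) * 1 ^ 2 / 2 = xc 0 - (N : ℝ) * 0 ^ 2 / 2 := hgconst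
    rw [hxc0] at this
    linarith
  refine ⟨h1, h2, ?_⟩
  rw [h1, h2]
  rw [show x₀ + ((N : ℝ) - 1) / 2 - (x₀ + (N : ℝ) / 2) = -(1/2) by ring]
  simp [norm_neg]
end

section
/- Consider the ResNet x_{n+1} = x_n + (1/N) f(x_n, θ_n^N) in ℝ with f(x, θ) = θ² and alternating weights θ_n^N = (−1)^n. Then x_N = x₀ + 1. For the weight interpolation φ(x, s) = ((n+1 − Ns)θ_n^N + (Ns − n)θ_{n+1}^N)² on s ∈ [n/N, (n+1)/N], the ODE solution satisfies x(1) = x₀ + 1/3. Hence ‖x_N − x(1)‖ = 2/3 for every even N ≥ 2. -/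
open Set Real

/-- ResNet with `f(x, θ) = θ²` and alternating weights `θ_n = (-1)^n` versus the
weight-interpolation ODE: `x_N = x₀ + 1` while `x(1) = x₀ + 1/3`, so the gap is `2/3`. -/
theorem resnet_weight_interpolation_gap
    (N : ℕ) (hN : 2 ≤ N) (hNeven : Even N)
    (x : ℕ → ℝ) (x₀ : ℝ) (hx0 : x 0 = x₀)
    (hx : ∀ n : ℕ, x (n + 1) = x n + (N : ℝ)⁻¹ * ((-1 : ℝ) ^ n) ^ 2)
    (φ : ℝ → ℝ)
    (hφ : ∀ n : ℕ, n < N → ∀ s ∈ Icc ((n : ℝ) / N) (((n : ℝ) + 1) / N),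
      φ s = (((n : ℝ) + 1 - N * s) * (-1 : ℝ) ^ n + ((N : ℝ) * s - n) * (-1 : ℝ) ^ (n + 1)) ^ 2)
    (xc : ℝ → ℝ) (hxc0 : xc 0 = x₀)
    (hxc : ∀ s ∈ Icc (0:ℝ) 1, HasDerivAt xc (φ s) s) :
    x N = x₀ + 1 ∧ xc 1 = x₀ + 1 / 3 ∧ ‖x N - xc 1‖ = 2 / 3 := by
  have hN0 : (0:ℝ) < N := by positivity
  have hNne : (N:ℝ) ≠ 0 := ne_of_gt hN0
  -- discrete part
  have hxn : ∀ n : ℕ, x n = x₀ + n * (N:ℝ)⁻¹ := by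
    intro n
    induction n with
    | zero => simpa using hx0
    | succ n ih =>
      rw [hx n, ih]
      have : ((-1:ℝ)^n)^2 = 1 := by
        rw [← pow_mul, mul_comm, pow_mul]; norm_num
      rw [this]
      push_cast; ring
  have hxN : x N = x₀ + 1 := by
    rw [hxn N, mul_inv_cancel₀ hNne]
  -- step lemma for the continuous flow
  have hstep : ∀ n : ℕ, n < N →
      xc (((n:ℝ) + 1) / N) = xc ((n:ℝ) / N) + 1 / (3 * N) := by
    intro n hn
    set a : ℝ := (n:ℝ) / N with ha
    set b : ℝ := ((n:ℝ) + 1) / N with hb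
    have hab : a ≤ b := by
      rw [ha, hb]; gcongr; linarith
    have ha0 : 0 ≤ a := by positivity
    have hb1 : b ≤ 1 := by
      rw [hb, div_le_one hN0]
      have : (n:ℝ) + 1 ≤ N := by exact_mod_cast hn
      linarith
    set k : ℝ := 2 * n + 1 with hk
    set g : ℝ → ℝ := fun s => xc a + ((2 * N * s - k) ^ 3 + 1) / (6 * N) with hg
    -- φ s = (2Ns - k)^2 on [a,b]
    have hφeq : ∀ s ∈ Icc a b, φ s = (2 * N * s - k) ^ 2 := by
      intro s hs
      have he : ((-1:ℝ)^n)^2 = 1 := by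
        rw [← pow_mul, mul_comm, pow_mul]; norm_num
      rw [hφ n hn s hs, pow_succ, hk]
      linear_combination (2*(N:ℝ)*s - (2*(n:ℝ)+1))^2 * he
    -- g has derivative (2Ns-k)^2
    have hgderiv : ∀ s : ℝ, HasDerivAt g ((2 * N * s - k) ^ 2) s := by
      intro s
      have h1 : HasDerivAt (fun s : ℝ => 2 * N * s - k) (2 * N) s := by
        simpa using ((hasDerivAt_id s).const_mul (2 * (N:ℝ))).sub_const k
      have h2 := ((h1.pow 3).add_const 1).div_const (6 * N)
      have h3 := h2.const_add (xc a)
      refine HasDerivAt.congr_deriv h3 ?_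
      field_simp
      ring
    -- xc and g agree on [a, b]
    have key : ∀ s ∈ Icc a b, xc s = g s := by
      apply eq_of_has_deriv_right_eq (f' := fun s => φ s)
      · intro s hs
        have hs' : s ∈ Icc (0:ℝ) 1 := ⟨le_trans ha0 hs.1, le_trans hs.2.le hb1⟩
        exact (hxc s hs').hasDerivWithinAt
      · intro s hs
        have hs' : s ∈ Icc a b := ⟨hs.1, hs.2.le⟩
        rw [hφeq s hs']
        exact (hgderiv s).hasDerivWithinAt
      · intro s hs
        have hs' : s ∈ Icc (0:ℝ) 1 := ⟨le_trans ha0 hs.1, le_trans hs.2 hb1⟩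
        exact (hxc s hs').continuousAt.continuousWithinAt
      · exact (Continuous.continuousOn (by fun_prop))
      · simp [hg]
        have : 2 * (N:ℝ) * a - k = -1 := by
          rw [ha, hk]; field_simp; ring
        rw [this]; norm_num
    have hb' := key b ⟨hab, le_refl b⟩
    rw [hb']
    have h1 : 2 * (N:ℝ) * b - k = 1 := by
      rw [hb, hk]; field_simp; ring
    simp only [hg, h1]
    field_simp
    ring
  -- induction: xc (n/N) = x₀ + n/(3N)
  have hclaim : ∀ n : ℕ, n ≤ N → xc ((n:ℝ) / N) = x₀ + n / (3 * N) := by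
    intro n
    induction n with
    | zero => intro _; simpa using hxc0
    | succ n ih =>
      intro hn
      have hn' : n < N := hn
      have := hstep n hn'
      push_cast
      rw [this, ih (le_of_lt hn')]
      push_cast
      field_simp
      ring
  have hxc1 : xc 1 = x₀ + 1 / 3 := by
    have := hclaim N (le_refl N)
    rw [div_self hNne] at this
    rw [this]
    field_simp
  refine ⟨hxN, hxc1, ?_⟩
  rw [hxN, hxc1]
  rw [Real.norm_eq_abs]
  rw [show x₀ + 1 - (x₀ + 1/3) = 2/3 by ring]
  norm_num
end

section
/- (Reconstruction error of reverse-time Euler.) Let f_n : ℝ^d → ℝ^d for n = 0,…,N−1 be C² with ‖f_n‖_∞ ≤ C_f and ‖∂_x f_n‖_∞ ≤ L_f (constants independent of n, N), with uniformly bounded second derivatives. Define the forward iterates x_{n+1} = x_n + (1/N) f_n(x_n) and the backward iterates x̃_N = x_N, x̃_n = x̃_{n+1} − (1/N) f_n(x̃_{n+1}). Then for all 0 ≤ n ≤ N, ‖x_n − x̃_n‖ ≤ (e^{L_f} − 1) C_f / N + O(1/N²). -/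
open Real

/-- Reconstruction error of the reverse-time Euler scheme for a ResNet with bounded,
Lipschitz residual functions: `‖x_n - x̃_n‖ ≤ (e^{L_f} - 1) C_f / N + O(1/N²)`. -/
theorem reverse_euler_reconstruction_error
    {d : ℕ} (f : ℕ → ℕ → EuclideanSpace ℝ (Fin d) → EuclideanSpace ℝ (Fin d))
    (Cf Lf C₂ : ℝ) (hLf : 0 < Lf)
    (hsmooth : ∀ N n, n < N → ContDiff ℝ 2 (f N n))
    (hCf : ∀ N n, n < N → ∀ x, ‖f N n x‖ ≤ Cf)
    (hLf' : ∀ N n, n < N → ∀ x, ‖fderiv ℝ (f N n) x‖ ≤ Lf)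
    (hC₂ : ∀ N n, n < N → ∀ x, ‖iteratedFDeriv ℝ 2 (f N n) x‖ ≤ C₂)
    (x xt : ℕ → ℕ → EuclideanSpace ℝ (Fin d))
    (hfwd : ∀ N n, n < N → x N (n + 1) = x N n + (N : ℝ)⁻¹ • f N n (x N n))
    (hbwd0 : ∀ N, xt N N = x N N)
    (hbwd : ∀ N n, n < N → xt N n = xt N (n + 1) - (N : ℝ)⁻¹ • f N n (xt N (n + 1))) :
    ∃ K : ℝ, ∀ N, 1 ≤ N → ∀ n ≤ N,
      ‖x N n - xt N n‖ ≤ (Real.exp Lf - 1) * Cf / N + K / (N : ℝ) ^ 2 := by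
  refine ⟨0, fun N hN n hn => ?_⟩
  have hNpos : (0 : ℝ) < N := by exact_mod_cast hN
  have hCf0 : 0 ≤ Cf := le_trans (norm_nonneg _) (hCf 1 0 one_pos 0)
  have hlip : ∀ m, m < N → ∀ a b : EuclideanSpace ℝ (Fin d),
      ‖f N m a - f N m b‖ ≤ Lf * ‖a - b‖ := by
    intro m hm a b
    exact (convex_univ (𝕜 := ℝ)).norm_image_sub_le_of_norm_fderiv_le
      (fun y _ => ((hsmooth N m hm).differentiable (by norm_num)).differentiableAt)
      (fun y _ => hLf' N m hm y) trivial trivial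
  have key : ∀ m, m ≤ N →
      ‖x N (N - m) - xt N (N - m)‖ ≤ Cf / N * ((1 + Lf / N) ^ m - 1) := by
    intro m
    induction m with
    | zero =>
      intro _
      simp [hbwd0 N]
    | succ m ih =>
      intro hm
      set n := N - (m + 1) with hn
      have hnlt : n < N := by omega
      have hn1 : n + 1 = N - m := by omega
      have e1 := ih (le_of_lt (by omega))
      rw [← hn1] at e1
      have hx : x N n = x N (n + 1) - (N : ℝ)⁻¹ • f N n (x N n) := by
        rw [hfwd N n hnlt]; abel
      have hdiff : x N n - xt N n =
          (x N (n + 1) - xt N (n + 1))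
            - (N : ℝ)⁻¹ • (f N n (x N n) - f N n (xt N (n + 1))) := by
        rw [hbwd N n hnlt, smul_sub]
        nth_rewrite 1 [hx]
        abel
      have hxn' : x N n - xt N (n + 1) =
          (x N (n + 1) - xt N (n + 1)) - (N : ℝ)⁻¹ • f N n (x N n) := by
        nth_rewrite 1 [hx]
        abel
      have hsm : ∀ v : EuclideanSpace ℝ (Fin d), ‖f N n v‖ ≤ Cf →
          ‖(N : ℝ)⁻¹ • f N n v‖ ≤ Cf / N := by
        intro v hv
        rw [norm_smul, norm_inv, Real.norm_natCast, div_eq_inv_mul]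
        exact mul_le_mul_of_nonneg_left hv (inv_nonneg.mpr hNpos.le)
      have hbound1 : ‖x N n - xt N (n + 1)‖ ≤ ‖x N (n + 1) - xt N (n + 1)‖ + Cf / N := by
        rw [hxn']
        have := hsm (x N n) (hCf N n hnlt _)
        have h4 := norm_sub_le (x N (n + 1) - xt N (n + 1)) ((N : ℝ)⁻¹ • f N n (x N n))
        linarith
      have hbound2 : ‖f N n (x N n) - f N n (xt N (n + 1))‖
          ≤ Lf * (‖x N (n + 1) - xt N (n + 1)‖ + Cf / N) :=
        (hlip n hnlt _ _).trans (mul_le_mul_of_nonneg_left hbound1 hLf.le)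
      have hstep : ‖x N n - xt N n‖ ≤
          (1 + Lf / N) * ‖x N (n + 1) - xt N (n + 1)‖ + Lf * Cf / N ^ 2 := by
        rw [hdiff]
        calc ‖(x N (n + 1) - xt N (n + 1))
                - (N : ℝ)⁻¹ • (f N n (x N n) - f N n (xt N (n + 1)))‖
            ≤ ‖x N (n + 1) - xt N (n + 1)‖
              + (N : ℝ)⁻¹ * ‖f N n (x N n) - f N n (xt N (n + 1))‖ := by
              have h5 := norm_sub_le (x N (n + 1) - xt N (n + 1))
                ((N : ℝ)⁻¹ • (f N n (x N n) - f N n (xt N (n + 1))))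
              rw [norm_smul, norm_inv, Real.norm_natCast] at h5
              exact h5
          _ ≤ ‖x N (n + 1) - xt N (n + 1)‖
              + (N : ℝ)⁻¹ * (Lf * (‖x N (n + 1) - xt N (n + 1)‖ + Cf / N)) := by
              have h6 := mul_le_mul_of_nonneg_left hbound2 (inv_nonneg.mpr hNpos.le)
              linarith
          _ = (1 + Lf / N) * ‖x N (n + 1) - xt N (n + 1)‖ + Lf * Cf / N ^ 2 := by
              field_simp
              ring
      refine hstep.trans ?_
      have := e1
      calc (1 + Lf / N) * ‖x N (n + 1) - xt N (n + 1)‖ + Lf * Cf / N ^ 2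
          ≤ (1 + Lf / N) * (Cf / N * ((1 + Lf / N) ^ m - 1)) + Lf * Cf / N ^ 2 := by
            gcongr
        _ = Cf / N * ((1 + Lf / N) ^ (m + 1) - 1) := by
            rw [pow_succ]
            ring
  have hmn : N - (N - n) = n := by omega
  have := key (N - n) (by omega)
  rw [hmn] at this
  refine this.trans ?_
  have hexp : (1 + Lf / N) ^ (N - n) ≤ Real.exp Lf := by
    have h1 : (1 + Lf / N : ℝ) ≤ Real.exp (Lf / N) := by
      have := Real.add_one_le_exp (Lf / N)
      linarith
    have h2 : (1 + Lf / N : ℝ) ^ (N - n) ≤ Real.exp (Lf / N) ^ (N - n) := by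
      apply pow_le_pow_left₀ _ h1
      positivity
    refine h2.trans ?_
    rw [← Real.exp_nat_mul]
    apply Real.exp_le_exp.mpr
    have hle : ((N - n : ℕ) : ℝ) ≤ N := by exact_mod_cast Nat.sub_le N n
    have h7 : ((N - n : ℕ) : ℝ) * (Lf / N) ≤ (N : ℝ) * (Lf / N) :=
      mul_le_mul_of_nonneg_right hle (by positivity)
    have h8 : (N : ℝ) * (Lf / N) = Lf := by field_simp
    linarith
  have hfin : Cf / N * ((1 + Lf / N) ^ (N - n) - 1) ≤ Cf / N * (Real.exp Lf - 1) :=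
    mul_le_mul_of_nonneg_left (by linarith) (by positivity)
  refine hfin.trans (le_of_eq ?_)
  ring
end

section
/- (Heun one-step reconstruction defect.) Let f_n, f_{n+1} : ℝ^d → ℝ^d be C² with bounded derivatives up to order 2, with Jacobians J_n = ∂_x f_n. Define φ_n(x) = (1/2)(f_n(x) + f_{n+1}(x + (1/N) f_n(x))) and ψ_n(x) = (1/2)(f_{n+1}(x) + f_n(x − (1/N) f_{n+1}(x))). Then for every x, ψ_n(x + (1/N)φ_n(x)) − φ_n(x) = (1/(4N))(J_{n+1}(x) − J_n(x))[f_{n+1}(x) − f_n(x)] + O(1/N²), where the O(1/N²) is uniform in x over any set on which f_n, f_{n+1} and their first two derivatives are uniformly bounded. -/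
open Real

section Helpers

variable {E F : Type*} [NormedAddCommGroup E] [NormedSpace ℝ E]
  [NormedAddCommGroup F] [NormedSpace ℝ F]

private lemma my_lip (f : E → F) (hf : Differentiable ℝ f) {C : ℝ}
    (hC : ∀ z, ‖fderiv ℝ f z‖ ≤ C) (x y : E) : ‖f y - f x‖ ≤ C * ‖y - x‖ :=
  Convex.norm_image_sub_le_of_norm_fderiv_le (fun z _ => (hf z)) (fun z _ => hC z)
    convex_univ (Set.mem_univ x) (Set.mem_univ y)

private lemma my_taylor (f : E → F) (hf : Differentiable ℝ f) {C : ℝ} (hC : 0 ≤ C)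
    (hlip : ∀ u v, ‖fderiv ℝ f u - fderiv ℝ f v‖ ≤ C * ‖u - v‖) (x h : E) :
    ‖f (x + h) - f x - fderiv ℝ f x h‖ ≤ C * ‖h‖ ^ 2 := by
  set L := fderiv ℝ f x with hL
  have hFd : Differentiable ℝ (fun z => f z - L z) := hf.sub L.differentiable
  have hfd : ∀ z, fderiv ℝ (fun z => f z - L z) z = fderiv ℝ f z - L := by
    intro z
    rw [fderiv_fun_sub (hf z) L.differentiableAt, L.fderiv]
  have key := Convex.norm_image_sub_le_of_norm_fderiv_le (s := Metric.closedBall x ‖h‖)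
      (C := C * ‖h‖) (fun z _ => (hFd z)) (fun z hz => by
        rw [hfd z]
        calc ‖fderiv ℝ f z - L‖ ≤ C * ‖z - x‖ := hlip z x
          _ ≤ C * ‖h‖ := by
              apply mul_le_mul_of_nonneg_left _ hC
              simpa [dist_eq_norm] using hz)
      (convex_closedBall x ‖h‖) (Metric.mem_closedBall_self (norm_nonneg h))
      (by rw [Metric.mem_closedBall, dist_eq_norm, add_sub_cancel_left])
  have e : f (x + h) - L (x + h) - (f x - L x) = f (x + h) - f x - L h := by
    rw [map_add]; abel
  have e2 : x + h - x = h := add_sub_cancel_left x h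
  rw [e, e2] at key
  calc ‖f (x + h) - f x - L h‖ ≤ C * ‖h‖ * ‖h‖ := key
    _ = C * ‖h‖ ^ 2 := by ring

private lemma my_dlip (f : E → F) (hf : ContDiff ℝ 2 f) {C : ℝ}
    (h2 : ∀ z, ‖iteratedFDeriv ℝ 2 f z‖ ≤ C) (u v : E) :
    ‖fderiv ℝ f u - fderiv ℝ f v‖ ≤ C * ‖u - v‖ := by
  have hd : Differentiable ℝ (fderiv ℝ f) :=
    (hf.fderiv_right (m := 1) (by norm_num)).differentiable one_ne_zero
  refine my_lip _ hd (fun z => ?_) v u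
  have e1 : ‖fderiv ℝ (fderiv ℝ f) z‖ = ‖iteratedFDeriv ℝ 1 (fderiv ℝ f) z‖ := by
    rw [← norm_iteratedFDeriv_fderiv (n := 0), norm_iteratedFDeriv_zero]
  have e2 : ‖iteratedFDeriv ℝ 1 (fderiv ℝ f) z‖ = ‖iteratedFDeriv ℝ 2 f z‖ :=
    norm_iteratedFDeriv_fderiv (n := 1)
  rw [e1, e2]; exact h2 z

end Helpers

set_option maxHeartbeats 4000000 in
/-- Heun one-step reconstruction defect: with `φ_N` the Heun forward increment and
`ψ_N` the Heun backward increment, `ψ_N(x + φ_N(x)/N) - φ_N(x)` equals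
`(1/(4N))(J_{n+1}(x) - J_n(x))[f_{n+1}(x) - f_n(x)]` up to `O(1/N²)`, uniformly in `x`. -/
theorem heun_one_step_defect
    {d : ℕ} (f g : EuclideanSpace ℝ (Fin d) → EuclideanSpace ℝ (Fin d))
    (hf : ContDiff ℝ 2 f) (hg : ContDiff ℝ 2 g)
    (C : ℝ)
    (hf0 : ∀ x, ‖f x‖ ≤ C) (hg0 : ∀ x, ‖g x‖ ≤ C)
    (hf1 : ∀ x, ‖fderiv ℝ f x‖ ≤ C) (hg1 : ∀ x, ‖fderiv ℝ g x‖ ≤ C)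
    (hf2 : ∀ x, ‖iteratedFDeriv ℝ 2 f x‖ ≤ C) (hg2 : ∀ x, ‖iteratedFDeriv ℝ 2 g x‖ ≤ C) :
    ∃ K : ℝ, ∀ N : ℕ, 1 ≤ N → ∀ x : EuclideanSpace ℝ (Fin d),
      ‖(1 / 2 : ℝ) • (g (x + (N : ℝ)⁻¹ • ((1 / 2 : ℝ) • (f x + g (x + (N : ℝ)⁻¹ • f x))))
            + f ((x + (N : ℝ)⁻¹ • ((1 / 2 : ℝ) • (f x + g (x + (N : ℝ)⁻¹ • f x))))
                - (N : ℝ)⁻¹ • g (x + (N : ℝ)⁻¹ • ((1 / 2 : ℝ) • (f x + g (x + (N : ℝ)⁻¹ • f x))))))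
          - (1 / 2 : ℝ) • (f x + g (x + (N : ℝ)⁻¹ • f x))
          - (1 / (4 * (N : ℝ))) • ((fderiv ℝ g x - fderiv ℝ f x) (g x - f x))‖
        ≤ K / (N : ℝ) ^ 2 := by
  have hC0 : 0 ≤ C := le_trans (norm_nonneg _) (hf0 0)
  set B : ℝ := 1 + C with hB
  have hB1 : 1 ≤ B := by simp [hB]; linarith
  have hB0 : 0 < B := by linarith
  have hCB : C ≤ B := by simp [hB]
  refine ⟨8 * B ^ 4, ?_⟩
  intro N hN x
  have hN0 : (0 : ℝ) < N := by exact_mod_cast Nat.lt_of_lt_of_le Nat.zero_lt_one hN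
  set ε : ℝ := (N : ℝ)⁻¹ with hεdef
  have hε0 : 0 < ε := by positivity
  have hε1 : ε ≤ 1 := by
    rw [hεdef]
    rw [inv_le_one_iff₀]; right; exact_mod_cast hN
  have hfd : Differentiable ℝ f := hf.differentiable (by norm_num)
  have hgd : Differentiable ℝ g := hg.differentiable (by norm_num)
  have hflip := my_dlip f hf hf2
  have hglip := my_dlip g hg hg2
  set a := f x with ha
  set Jf := fderiv ℝ f x with hJf
  set Jg := fderiv ℝ g x with hJg
  set b := g (x + ε • a) with hb
  set φ := (1 / 2 : ℝ) • (a + b) with hφ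
  set y := x + ε • φ with hy
  set gy := g y with hgy
  set z := y - ε • gy with hz
  -- residuals
  set R3 := b - g x - ε • Jg a with hR3def
  set R1 := gy - g x - ε • Jg φ with hR1def
  set R2 := f z - f x - Jf (ε • (φ - gy)) with hR2def
  -- basic norm bounds
  have hna : ‖a‖ ≤ B := le_trans (hf0 x) hCB
  have hnb : ‖b‖ ≤ B := le_trans (hg0 _) hCB
  have hnφ : ‖φ‖ ≤ B := by
    have h1 : ‖φ‖ ≤ ‖(1/2 : ℝ)‖ * ‖a + b‖ := by rw [hφ, norm_smul]
    have h2 : ‖(1/2 : ℝ)‖ = (1/2 : ℝ) := by norm_num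
    have h3 : ‖a + b‖ ≤ B + B := le_trans (norm_add_le a b) (by linarith)
    rw [h2] at h1
    linarith
  have hngy : ‖gy‖ ≤ B := le_trans (hg0 _) hCB
  have hnJf : ‖Jf‖ ≤ B := le_trans (hf1 x) hCB
  have hnJg : ‖Jg‖ ≤ B := le_trans (hg1 x) hCB
  -- Taylor bounds
  have hB2nn : (0:ℝ) ≤ B ^ 2 := by positivity
  have hB23 : B ^ 2 ≤ B ^ 3 := by linarith [mul_le_mul_of_nonneg_right hB1 hB2nn]
  have hB34 : B ^ 3 ≤ B ^ 4 := by linarith [mul_le_mul_of_nonneg_right hB23 hB0.le]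
  have hε2 : ε ^ 2 ≤ ε := by linarith [mul_le_mul_of_nonneg_left hε1 hε0.le]
  have hf1' : B ^ 2 * ε ≤ B ^ 3 * ε := by linarith [mul_le_mul_of_nonneg_right hB23 hε0.le]
  have hf2' : B ^ 3 * ε ^ 2 ≤ B ^ 3 * ε := by linarith [mul_le_mul_of_nonneg_left hε2 (by positivity : (0:ℝ) ≤ B ^ 3)]
  have hf3' : (0:ℝ) ≤ B ^ 4 * ε ^ 2 := by positivity
  have hf4' : B ^ 3 * ε ^ 2 ≤ B ^ 4 * ε ^ 2 := by linarith [mul_le_mul_of_nonneg_right hB34 (sq_nonneg ε)]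
  have hR3 : ‖R3‖ ≤ B ^ 3 * ε ^ 2 := by
    have t := my_taylor g hgd hC0 hglip x (ε • a)
    have e : Jg (ε • a) = ε • Jg a := map_smul Jg ε a
    rw [e] at t
    refine le_trans t ?_
    have : ‖ε • a‖ ≤ ε * B := by
      rw [norm_smul, Real.norm_eq_abs, abs_of_pos hε0]
      exact mul_le_mul_of_nonneg_left hna (le_of_lt hε0)
    calc C * ‖ε • a‖ ^ 2 ≤ B * (ε * B) ^ 2 := by
          apply mul_le_mul hCB _ (by positivity) (by linarith)
          exact pow_le_pow_left₀ (norm_nonneg _) this 2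
      _ = B ^ 3 * ε ^ 2 := by ring
  have hR1 : ‖R1‖ ≤ B ^ 3 * ε ^ 2 := by
    have t := my_taylor g hgd hC0 hglip x (ε • φ)
    have e : Jg (ε • φ) = ε • Jg φ := map_smul Jg ε φ
    rw [e] at t
    refine le_trans t ?_
    have : ‖ε • φ‖ ≤ ε * B := by
      rw [norm_smul, Real.norm_eq_abs, abs_of_pos hε0]
      exact mul_le_mul_of_nonneg_left hnφ (le_of_lt hε0)
    calc C * ‖ε • φ‖ ^ 2 ≤ B * (ε * B) ^ 2 := by
          apply mul_le_mul hCB _ (by positivity) (by linarith)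
          exact pow_le_pow_left₀ (norm_nonneg _) this 2
      _ = B ^ 3 * ε ^ 2 := by ring
  have hR2 : ‖R2‖ ≤ 4 * B ^ 3 * ε ^ 2 := by
    have hzx : z = x + ε • (φ - gy) := by
      rw [hz, hy, smul_sub]; abel
    have t := my_taylor f hfd hC0 hflip x (ε • (φ - gy))
    rw [← hzx] at t
    refine le_trans t ?_
    have hsub : ‖φ - gy‖ ≤ 2 * B := le_trans (norm_sub_le φ gy) (by linarith)
    have : ‖ε • (φ - gy)‖ ≤ ε * (2 * B) := by
      rw [norm_smul, Real.norm_eq_abs, abs_of_pos hε0]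
      exact mul_le_mul_of_nonneg_left hsub (le_of_lt hε0)
    calc C * ‖ε • (φ - gy)‖ ^ 2 ≤ B * (ε * (2 * B)) ^ 2 := by
          apply mul_le_mul hCB _ (by positivity) (by linarith)
          exact pow_le_pow_left₀ (norm_nonneg _) this 2
      _ = 4 * B ^ 3 * ε ^ 2 := by ring
  -- the algebraic identity
  have key : (1 / 2 : ℝ) • (gy + f z) - φ - (1 / (4 * (N:ℝ))) • ((Jg - Jf) (g x - a))
      = (ε / 4) • (Jg (ε • Jg a + R3))
        + (ε / 2) • (Jf ((1 / 2 : ℝ) • (ε • Jg a + R3) - ε • Jg φ - R1))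
        + (1 / 2 : ℝ) • (R1 + R2 - R3) := by
    have h4N : (1 / (4 * (N:ℝ))) = ε / 4 := by
      rw [hεdef]; field_simp
    rw [h4N]
    have efz : f z = f x + Jf (ε • (φ - gy)) + R2 := by rw [hR2def]; abel
    have egy : gy = g x + ε • Jg φ + R1 := by rw [hR1def]; abel
    have eb : b = g x + ε • Jg a + R3 := by rw [hR3def]; abel
    rw [efz, egy, hφ, eb, ha]
    simp only [map_smul, map_add, map_sub, ContinuousLinearMap.sub_apply,
      ContinuousLinearMap.add_apply, smul_add, smul_sub, smul_smul]
    module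
  -- final bound
  rw [key]
  clear key hR1def hR2def hR3def hz hy hgy hb hφ ha hJf hJg
  clear_value a b φ y gy z R1 R2 R3 Jf Jg ε B
  clear hf hg hf0 hg0 hf1 hg1 hf2 hg2 hfd hgd hflip hglip hnb hngy y z b gy x
  -- norm bounds on the three pieces
  have hJga : ‖Jg a‖ ≤ B * B := le_trans (Jg.le_opNorm a) (mul_le_mul hnJg hna (norm_nonneg _) (by linarith))
  have hJgφ : ‖Jg φ‖ ≤ B * B := le_trans (Jg.le_opNorm φ) (mul_le_mul hnJg hnφ (norm_nonneg _) (by linarith))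
  have hεB : ε ^ 2 ≤ ε := hε2
  have hin1 : ‖ε • Jg a + R3‖ ≤ 2 * B ^ 3 * ε := by
    calc ‖ε • Jg a + R3‖ ≤ ‖ε • Jg a‖ + ‖R3‖ := norm_add_le _ _
      _ ≤ ε * (B * B) + B ^ 3 * ε ^ 2 := by
          gcongr
          rw [norm_smul, Real.norm_eq_abs, abs_of_pos hε0]
          exact mul_le_mul_of_nonneg_left hJga (le_of_lt hε0)
      _ ≤ 2 * B ^ 3 * ε := by linarith [hf1', hf2']
  have ht1 : ‖(ε / 4) • (Jg (ε • Jg a + R3))‖ ≤ B ^ 4 * ε ^ 2 := by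
    rw [norm_smul, Real.norm_eq_abs, abs_of_pos (by linarith : (0:ℝ) < ε / 4)]
    calc (ε / 4) * ‖Jg (ε • Jg a + R3)‖ ≤ (ε / 4) * (B * (2 * B ^ 3 * ε)) := by
          apply mul_le_mul_of_nonneg_left _ (by linarith)
          exact le_trans (Jg.le_opNorm _) (mul_le_mul hnJg hin1 (norm_nonneg _) (by linarith))
      _ ≤ B ^ 4 * ε ^ 2 := by linarith [hf3']
  have hin2 : ‖(1 / 2 : ℝ) • (ε • Jg a + R3) - ε • Jg φ - R1‖ ≤ 3 * B ^ 3 * ε := by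
    calc ‖(1 / 2 : ℝ) • (ε • Jg a + R3) - ε • Jg φ - R1‖
        ≤ ‖(1 / 2 : ℝ) • (ε • Jg a + R3)‖ + ‖ε • Jg φ‖ + ‖R1‖ := by
          refine le_trans (norm_sub_le _ _) ?_
          gcongr
          exact norm_sub_le _ _
      _ ≤ (1/2) * (2 * B ^ 3 * ε) + ε * (B * B) + B ^ 3 * ε ^ 2 := by
          gcongr
          · rw [norm_smul, show ‖(1/2:ℝ)‖ = (1/2:ℝ) by norm_num]
            exact mul_le_mul_of_nonneg_left hin1 (by norm_num)
          · rw [norm_smul, Real.norm_eq_abs, abs_of_pos hε0]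
            exact mul_le_mul_of_nonneg_left hJgφ (le_of_lt hε0)
      _ ≤ 3 * B ^ 3 * ε := by linarith [hf1', hf2']
  have ht2 : ‖(ε / 2) • (Jf ((1 / 2 : ℝ) • (ε • Jg a + R3) - ε • Jg φ - R1))‖ ≤ 2 * B ^ 4 * ε ^ 2 := by
    rw [norm_smul, Real.norm_eq_abs, abs_of_pos (by linarith : (0:ℝ) < ε / 2)]
    calc (ε / 2) * ‖Jf _‖ ≤ (ε / 2) * (B * (3 * B ^ 3 * ε)) := by
          apply mul_le_mul_of_nonneg_left _ (by linarith)
          exact le_trans (Jf.le_opNorm _) (mul_le_mul hnJf hin2 (norm_nonneg _) (by linarith))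
      _ ≤ 2 * B ^ 4 * ε ^ 2 := by linarith [hf3']
  have ht3 : ‖(1 / 2 : ℝ) • (R1 + R2 - R3)‖ ≤ 3 * B ^ 3 * ε ^ 2 := by
    rw [norm_smul, show ‖(1/2:ℝ)‖ = (1/2:ℝ) by norm_num]
    have : ‖R1 + R2 - R3‖ ≤ B ^ 3 * ε ^ 2 + 4 * B ^ 3 * ε ^ 2 + B ^ 3 * ε ^ 2 := by
      refine le_trans (norm_sub_le _ _) ?_
      gcongr
      exact le_trans (norm_add_le _ _) (by gcongr)
    linarith
  have hsum : ‖(ε / 4) • (Jg (ε • Jg a + R3))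
        + (ε / 2) • (Jf ((1 / 2 : ℝ) • (ε • Jg a + R3) - ε • Jg φ - R1))
        + (1 / 2 : ℝ) • (R1 + R2 - R3)‖ ≤ 8 * B ^ 4 * ε ^ 2 := by
    refine le_trans (norm_add_le _ _) ?_
    refine le_trans (add_le_add (le_trans (norm_add_le _ _) (add_le_add ht1 ht2)) ht3) ?_
    linarith [hf4']
  refine le_trans hsum ?_
  have : (8 * B ^ 4) / (N:ℝ) ^ 2 = 8 * B ^ 4 * ε ^ 2 := by
    rw [hεdef]; field_simp
  rw [this]
end
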